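/- If R0 = βN(μ/(d+r_a) + α(1-μ)/(d+r_s)) > 1 and 0 < μ < 1, then the point (S*, I_a*, I_s*) with S* = N/R0, I_a* = μ(d+σ)(d+r_s)N(1 - 1/R0)/((d+r_a)(d+r_s) + σ(d+μr_s) + σr_a(1-μ)), I_s* = ((1-μ)(d+r_a))/(μ(d+r_s)) · I_a* satisfies the equilibrium equations (d+σ)(N-S*) - βS*(I_a*+αI_s*) - σ(I_a*+I_s*) = 0, μβS*(I_a*+αI_s*) - (d+r_a)I_a* = 0, (1-μ)βS*(I_a*+αI_s*) - (d+r_s)I_s* = 0, and S*, I_a*, I_s* > 0 with S* + I_a* + I_s* < N. -/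

import Mathlib

set_option maxHeartbeats 1000000

private lemma endemic_aux1 (d σ ra rs μ D t : ℝ) (hμ : μ ≠ 0) (hB : d + rs ≠ 0)
    (hD : D ≠ 0) (hDdef : D = (d + ra) * (d + rs) + σ * (d + μ * rs) + σ * ra * (1 - μ)) :
    (d + σ) * t - (d + ra) / μ * (μ * (d + σ) * (d + rs) * t / D)
      - σ * ((μ * (d + σ) * (d + rs) * t / D)
        + (1 - μ) * (d + ra) / (μ * (d + rs)) * (μ * (d + σ) * (d + rs) * t / D)) = 0 := by
  subst hDdef
  field_simp
  ring

private lemma endemic_aux2 (d σ ra rs μ D s t : ℝ) (hμ : μ ≠ 0) (hB : d + rs ≠ 0)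
    (hD : D ≠ 0) :
    s + (μ * (d + σ) * (d + rs) * t / D)
      + (1 - μ) * (d + ra) / (μ * (d + rs)) * (μ * (d + σ) * (d + rs) * t / D)
    = s + (d + σ) * (μ * (d + rs) + (1 - μ) * (d + ra)) / D * t := by
  field_simp
  ring

/-- When R0 > 1 and 0 < μ < 1, the endemic point (S*, I_a*, I_s*)
satisfies the equilibrium equations and lies in the interior of D₀. -/
theorem endemic_equilibrium_exists
    (d σ β N ra rs α μ : ℝ)
    (hd : 0 < d) (hσ : 0 < σ) (hβ : 0 < β) (hN : 0 < N)
    (hra : 0 < ra) (hrs : 0 < rs)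
    (hα0 : 0 < α) (hα1 : α ≤ 1) (hμ0 : 0 < μ) (hμ1 : μ < 1)
    (hR0 : 1 < β * N * (μ / (d + ra) + α * (1 - μ) / (d + rs))) :
    let R0 : ℝ := β * N * (μ / (d + ra) + α * (1 - μ) / (d + rs))
    let Sstar : ℝ := N / R0
    let Iastar : ℝ := μ * (d + σ) * (d + rs) * N * (1 - 1 / R0) /
      ((d + ra) * (d + rs) + σ * (d + μ * rs) + σ * ra * (1 - μ))
    let Isstar : ℝ := (1 - μ) * (d + ra) / (μ * (d + rs)) * Iastar
    (d + σ) * (N - Sstar) - β * Sstar * (Iastar + α * Isstar)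
        - σ * (Iastar + Isstar) = 0 ∧
    μ * β * Sstar * (Iastar + α * Isstar) - (d + ra) * Iastar = 0 ∧
    (1 - μ) * β * Sstar * (Iastar + α * Isstar) - (d + rs) * Isstar = 0 ∧
    0 < Sstar ∧ 0 < Iastar ∧ 0 < Isstar ∧ Sstar + Iastar + Isstar < N := by
  intro R0 Sstar Iastar Isstar
  have hA : 0 < d + ra := by linarith
  have hB : 0 < d + rs := by linarith
  have hμ' : 0 < 1 - μ := by linarith
  have hR0pos : (0:ℝ) < R0 := lt_trans one_pos hR0
  have hR0ne : R0 ≠ 0 := ne_of_gt hR0pos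
  have hD : 0 < (d + ra) * (d + rs) + σ * (d + μ * rs) + σ * ra * (1 - μ) := by
    have h1 : 0 < σ * (d + μ * rs) := by positivity
    have h2 : 0 < σ * ra * (1 - μ) := by positivity
    nlinarith [mul_pos hA hB]
  have hDne : (d + ra) * (d + rs) + σ * (d + μ * rs) + σ * ra * (1 - μ) ≠ 0 := ne_of_gt hD
  have h1R0 : 0 < 1 - 1 / R0 := by
    have : 1 / R0 < 1 := by rw [div_lt_one hR0pos]; exact hR0
    linarith
  have hSpos : 0 < Sstar := div_pos hN hR0pos
  have hIapos : 0 < Iastar := by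
    apply div_pos
    · positivity
    · exact hD
  have hIspos : 0 < Isstar := by
    apply mul_pos _ hIapos
    apply div_pos (by positivity) (by positivity)
  have hIadef : Iastar = μ * (d + σ) * (d + rs) * (N * (1 - 1 / R0)) /
      ((d + ra) * (d + rs) + σ * (d + μ * rs) + σ * ra * (1 - μ)) := by
    show μ * (d + σ) * (d + rs) * N * (1 - 1 / R0) / _ = _
    ring
  have hβS : β * Sstar * (Iastar + α * Isstar) = (d + ra) / μ * Iastar := by
    show β * (N / R0) * (Iastar + α * ((1 - μ) * (d + ra) / (μ * (d + rs)) * Iastar))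
        = (d + ra) / μ * Iastar
    have hR0def : R0 = β * N * (μ / (d + ra) + α * (1 - μ) / (d + rs)) := rfl
    rw [hR0def]
    field_simp
  refine ⟨?_, ?_, ?_, hSpos, hIapos, hIspos, ?_⟩
  · rw [hβS]
    show (d + σ) * (N - N / R0) - (d + ra) / μ * Iastar -
        σ * (Iastar + (1 - μ) * (d + ra) / (μ * (d + rs)) * Iastar) = 0
    have hNt : N - N / R0 = N * (1 - 1 / R0) := by ring
    rw [hNt, hIadef]
    exact endemic_aux1 d σ ra rs μ _ (N * (1 - 1 / R0)) (ne_of_gt hμ0)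
      (ne_of_gt hB) hDne rfl
  · have h2 : μ * β * Sstar * (Iastar + α * Isstar)
        = μ * (β * Sstar * (Iastar + α * Isstar)) := by ring
    rw [h2, hβS]
    field_simp
    ring
  · have h3 : (1 - μ) * β * Sstar * (Iastar + α * Isstar)
        = (1 - μ) * (β * Sstar * (Iastar + α * Isstar)) := by ring
    rw [h3, hβS]
    show (1 - μ) * ((d + ra) / μ * Iastar) - (d + rs) *
        ((1 - μ) * (d + ra) / (μ * (d + rs)) * Iastar) = 0
    field_simp
    ring
  · -- Sstar + Iastar + Isstar < N
    have hsum : Sstar + Iastar + Isstar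
        = N / R0 + (d + σ) * (μ * (d + rs) + (1 - μ) * (d + ra)) /
          ((d + ra) * (d + rs) + σ * (d + μ * rs) + σ * ra * (1 - μ)) * (N * (1 - 1 / R0)) := by
      show N / R0 + Iastar + (1 - μ) * (d + ra) / (μ * (d + rs)) * Iastar = _
      rw [hIadef]
      rw [endemic_aux2 d σ ra rs μ _ (N / R0) (N * (1 - 1 / R0)) (ne_of_gt hμ0)
        (ne_of_gt hB) hDne]
    rw [hsum]
    have hc : (d + σ) * (μ * (d + rs) + (1 - μ) * (d + ra)) /
        ((d + ra) * (d + rs) + σ * (d + μ * rs) + σ * ra * (1 - μ)) < 1 := by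
      rw [div_lt_one hD]
      nlinarith [mul_pos (mul_pos hμ0 hB) hra, mul_pos (mul_pos hμ' hA) hrs]
    have hNpos : 0 < N * (1 - 1 / R0) := by positivity
    calc N / R0 + (d + σ) * (μ * (d + rs) + (1 - μ) * (d + ra)) /
          ((d + ra) * (d + rs) + σ * (d + μ * rs) + σ * ra * (1 - μ)) * (N * (1 - 1 / R0))
        < N / R0 + 1 * (N * (1 - 1 / R0)) := by
          exact add_lt_add_right (mul_lt_mul_of_pos_right hc hNpos) _
      _ = N := by field_simp; ring
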